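/- Let G be a finite simple graph, let H = ρ(G) be the 3-uniform hypergraph obtained from G by extending each edge with a fresh vertex, and let m ∈ ℕ. If there exists a 3-partite 3-uniform hypergraph H' on the vertex set of H with |E(H) \ E(H')| ≤ m, then there exists a spanning subgraph G' of G with |E(G)| − |E(G')| ≤ m such that G' admits a proper 3-coloring (adjacent vertices receive distinct colors). -/

import Mathlib

/-- The 3-uniform hypergraph `ρ(G)` obtained from a graph `G` by extending each
edge with a fresh vertex: vertices are `V(G)` (as `Sum.inl`) together with one
fresh vertex `Sum.inr e` for each edge `e` of `G`; the hyperedges are the sets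
`{u, v, a_e}` for each edge `e = {u, v}` of `G`. -/
def rho {V : Type*} [DecidableEq V] (G : SimpleGraph V) : Set (Finset (V ⊕ Sym2 V)) :=
  { h | ∃ u v, G.Adj u v ∧ h = {Sum.inl u, Sum.inl v, Sum.inr s(u, v)} }

/-- The vertex set of `ρ(G)`: the vertices of `G` together with the fresh
vertices `a_e` for the edges `e` of `G`. -/
def rhoVerts {V : Type*} (G : SimpleGraph V) : Set (V ⊕ Sym2 V) :=
  Set.range Sum.inl ∪ Sum.inr '' G.edgeSet

/-- `p` is a 3-partition of the 3-uniform hypergraph with hyperedge set `E`: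
the vertices of every hyperedge receive pairwise distinct colors. -/
def IsPartition3 {W : Type*} (E : Set (Finset W)) (p : W → Fin 3) : Prop :=
  ∀ e ∈ E, ∀ x ∈ e, ∀ y ∈ e, x ≠ y → p x ≠ p y

/-- The hyperedge associated to an edge of `G`. -/
def edgeTriple {V : Type*} [DecidableEq V] : Sym2 V → Finset (V ⊕ Sym2 V) :=
  Sym2.lift ⟨fun u v => {Sum.inl u, Sum.inl v, Sum.inr s(u, v)}, by
    intro u v
    dsimp only
    rw [Sym2.eq_swap]
    rw [Finset.insert_comm]⟩

lemma edgeTriple_mk {V : Type*} [DecidableEq V] (u v : V) :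
    edgeTriple (s(u, v)) = {Sum.inl u, Sum.inl v, Sum.inr s(u, v)} := rfl

lemma edgeTriple_inj {V : Type*} [DecidableEq V] : Function.Injective (edgeTriple (V := V)) := by
  intro e e' h
  have he : (Sum.inr e : V ⊕ Sym2 V) ∈ edgeTriple e := by
    induction e using Sym2.inductionOn with
    | hf u v => simp [edgeTriple_mk]
  rw [h] at he
  induction e' using Sym2.inductionOn with
  | hf u v =>
    simp [edgeTriple_mk] at he
    exact he

theorem colorable_subgraph_of_close_to_partite {V : Type*} [Fintype V] [DecidableEq V]
    (G : SimpleGraph V) (m : ℕ) (H' : Set (Finset (V ⊕ Sym2 V)))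
    (hvert : ∀ e ∈ H', ∀ x ∈ e, x ∈ rhoVerts G)
    (huni : ∀ e ∈ H', e.card = 3)
    (hpart : ∃ p : V ⊕ Sym2 V → Fin 3, IsPartition3 H' p)
    (hclose : (rho G \ H').ncard ≤ m) :
    ∃ G' : SimpleGraph V, G' ≤ G ∧ G.edgeSet.ncard - G'.edgeSet.ncard ≤ m ∧
      ∃ c : V → Fin 3, ∀ u v, G'.Adj u v → c u ≠ c v := by
  classical
  obtain ⟨p, hp⟩ := hpart
  set G' : SimpleGraph V :=
    { Adj := fun u v => G.Adj u v ∧ edgeTriple s(u, v) ∈ H'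
      symm := by
        constructor
        intro u v ⟨h1, h2⟩
        refine ⟨h1.symm, ?_⟩
        rwa [Sym2.eq_swap] at h2
      loopless := ⟨fun v h => G.loopless.irrefl v h.1⟩ } with hG'
  have hle : G' ≤ G := fun u v h => h.1
  refine ⟨G', hle, ?_, fun v => p (Sum.inl v), ?_⟩
  · -- cardinality bound
    have hsub : G'.edgeSet ⊆ G.edgeSet := SimpleGraph.edgeSet_mono hle
    have hrho_sub : rho G ⊆ edgeTriple '' G.edgeSet := by
      rintro h ⟨u, v, hadj, rfl⟩
      exact ⟨s(u, v), hadj, rfl⟩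
    have hfin : (rho G \ H').Finite :=
      ((G.edgeSet.toFinite.image edgeTriple).subset hrho_sub).subset Set.diff_subset
    have hmaps : ∀ e ∈ G.edgeSet \ G'.edgeSet, edgeTriple e ∈ rho G \ H' := by
      rintro e ⟨he, hne⟩
      induction e using Sym2.inductionOn with
      | hf u v =>
        rw [SimpleGraph.mem_edgeSet] at he hne
        refine ⟨⟨u, v, he, rfl⟩, fun hmem => hne ⟨he, hmem⟩⟩
    have hcard : (G.edgeSet \ G'.edgeSet).ncard ≤ (rho G \ H').ncard :=
      Set.ncard_le_ncard_of_injOn edgeTriple hmaps (edgeTriple_inj.injOn) hfin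
    have hdiff : (G.edgeSet \ G'.edgeSet).ncard = G.edgeSet.ncard - G'.edgeSet.ncard :=
      Set.ncard_diff hsub (G'.edgeSet.toFinite)
    omega
  · -- proper coloring
    intro u v hadj
    have hne : u ≠ v := hadj.1.ne
    have hmem := hadj.2
    refine hp _ hmem (Sum.inl u) ?_ (Sum.inl v) ?_ (by simp [hne])
    · simp [edgeTriple_mk]
    · simp [edgeTriple_mk]
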